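/- For every integer l ≥ 1 there exists p0 ∈ (0,1) with the following property: for every p ∈ (p0, 1) and every integer k ≥ 1 there exist constants b3, b4 > 0 (depending only on l, k and p) such that for every l-dependent collection Y = (Y_z)_{z∈ℤ²} of {0,1}-valued random variables with inf_{z∈ℤ²} P(Y_z = 1) ≥ p, and for every integer s ≥ 1, one has P(m_s^k(Y) < b3·s) ≤ e^{−b4·s}. -/

import Mathlib

open MeasureTheory ProbabilityTheory

/-- Nearest-neighbor adjacency on `ℤ²`: `z` and `w` are at `ℓ¹`-distance `1`. -/
def LatAdj (z w : ℤ × ℤ) : Prop := (z.1 - w.1).natAbs + (z.2 - w.2).natAbs = 1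

/-- A lattice animal: a finite subset of `ℤ²` containing the origin and connected
with respect to nearest-neighbor adjacency. -/
def IsLatticeAnimal (A : Finset (ℤ × ℤ)) : Prop :=
  (0, 0) ∈ A ∧
    ∀ z ∈ A, Relation.ReflTransGen (fun a b => LatAdj a b ∧ a ∈ A ∧ b ∈ A) (0, 0) z

/-- The points of `B` are pairwise at `ℓ∞`-distance at least `k`. -/
def LinfSep (k : ℕ) (B : Finset (ℤ × ℤ)) : Prop :=
  ∀ z ∈ B, ∀ w ∈ B, z ≠ w → (k : ℤ) ≤ max |z.1 - w.1| |z.2 - w.2|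

/-- `l`-dependence: the families `(Y_z)_{z ∈ A}` and `(Y_z)_{z ∈ B}` are independent whenever
the `ℓ∞`-distance between `A` and `B` is at least `l`. -/
def LDependent {Ω : Type} [MeasurableSpace Ω] (μ : Measure Ω) (l : ℕ)
    (Y : ℤ × ℤ → Ω → ℝ) : Prop :=
  ∀ A B : Set (ℤ × ℤ),
    (∀ z ∈ A, ∀ w ∈ B, (l : ℤ) ≤ max |z.1 - w.1| |z.2 - w.2|) →
    IndepFun (fun ω (z : A) => Y z ω) (fun ω (w : B) => Y w ω) μ

namespace Stmt3Aux

lemma latAdj_symm {a b : ℤ × ℤ} (h : LatAdj a b) : LatAdj b a := by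
  unfold LatAdj at *; omega

/-- A path of length `n` from the origin to `z` inside `A`. -/
def Reaches (A : Finset (ℤ × ℤ)) (z : ℤ × ℤ) (n : ℕ) : Prop :=
  ∃ f : ℕ → ℤ × ℤ, f 0 = (0, 0) ∧ f n = z ∧
    ∀ i < n, LatAdj (f i) (f (i + 1)) ∧ f i ∈ A ∧ f (i + 1) ∈ A

lemma reaches_of_rtg {A : Finset (ℤ × ℤ)} {z : ℤ × ℤ}
    (h : Relation.ReflTransGen (fun a b => LatAdj a b ∧ a ∈ A ∧ b ∈ A) (0, 0) z) :
    ∃ n, Reaches A z n := by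
  induction h with
  | refl => exact ⟨0, fun _ => (0, 0), rfl, rfl, by omega⟩
  | tail _ hbc ih =>
    obtain ⟨n, f, hf0, hfn, hstep⟩ := ih
    rename_i b c _
    refine ⟨n + 1, fun i => if i ≤ n then f i else c, by simp [hf0], by simp, ?_⟩
    intro i hi
    rcases Nat.lt_or_ge i n with hin | hin
    · simp only [Nat.le_of_lt hin, if_pos, Nat.succ_le_of_lt hin]
      exact hstep i hin
    · have hieq : i = n := by omega
      subst hieq
      simpa [hfn] using ⟨hbc.1, hbc.2.1, hbc.2.2⟩

lemma rtg_of_reaches {A : Finset (ℤ × ℤ)} {z : ℤ × ℤ} {n : ℕ} (h : Reaches A z n) :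
    Relation.ReflTransGen (fun a b => LatAdj a b ∧ a ∈ A ∧ b ∈ A) (0, 0) z := by
  induction n generalizing z with
  | zero =>
    obtain ⟨f, hf0, hfn, _⟩ := h
    rw [← hfn, hf0]
  | succ n ih =>
    obtain ⟨f, hf0, hfn, hstep⟩ := h
    have h1 : Reaches A (f n) n := ⟨f, hf0, rfl, fun i hi => hstep i (by omega)⟩
    have h2 := hstep n (by omega)
    rw [← hfn]
    exact (ih h1).tail ⟨h2.1, h2.2.1, h2.2.2⟩

/-- Distance from origin within `A`. -/
noncomputable def dA (A : Finset (ℤ × ℤ)) (z : ℤ × ℤ) : ℕ := sInf {n | Reaches A z n}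

lemma dA_spec {A : Finset (ℤ × ℤ)} {z : ℤ × ℤ} (h : ∃ n, Reaches A z n) :
    Reaches A z (dA A z) := Nat.sInf_mem h

lemma dA_le {A : Finset (ℤ × ℤ)} {z : ℤ × ℤ} {n : ℕ} (h : Reaches A z n) : dA A z ≤ n :=
  Nat.sInf_le h

lemma dA_zero (A : Finset (ℤ × ℤ)) : dA A (0, 0) = 0 :=
  Nat.le_zero.mp (dA_le ⟨fun _ => (0, 0), rfl, rfl, by omega⟩)

lemma reaches_zero {A : Finset (ℤ × ℤ)} {z : ℤ × ℤ} (h : Reaches A z 0) : z = (0, 0) := by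
  obtain ⟨f, hf0, hfn, _⟩ := h; rw [← hfn, hf0]

/-- Leaf removal: a maximal-distance vertex can be removed keeping the animal property. -/
lemma exists_leaf {A : Finset (ℤ × ℤ)} (hA : IsLatticeAnimal A) (h2 : 2 ≤ A.card) :
    ∃ z ∈ A, z ≠ (0, 0) ∧ IsLatticeAnimal (A.erase z) ∧ ∃ y ∈ A.erase z, LatAdj y z := by
  have hne : A.Nonempty := ⟨_, hA.1⟩
  obtain ⟨z, hzA, hzmax⟩ := Finset.exists_max_image A (dA A) hne
  have hreach : ∀ w ∈ A, ∃ n, Reaches A w n := fun w hw => reaches_of_rtg (hA.2 w hw)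
  -- some vertex ≠ 0
  obtain ⟨a, ha, b, hb, hab⟩ := Finset.one_lt_card.mp h2
  have hex : ∃ w ∈ A, w ≠ (0, 0) := by
    rcases eq_or_ne a (0, 0) with h | h
    · exact ⟨b, hb, by rw [← h]; exact hab.symm⟩
    · exact ⟨a, ha, h⟩
  obtain ⟨w, hwA, hw0⟩ := hex
  have hdw : 1 ≤ dA A w := by
    by_contra h
    push_neg at h
    exact hw0 (reaches_zero (by simpa [Nat.lt_one_iff.mp h] using dA_spec (hreach w hwA)))
  have hdz : 1 ≤ dA A z := le_trans hdw (hzmax w hwA)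
  have hz0 : z ≠ (0, 0) := by intro h; subst h; rw [dA_zero] at hdz; omega
  -- minimal paths avoid z (except endpoint)
  have key : ∀ w ∈ A, w ≠ z → Reaches (A.erase z) w (dA A w) := by
    intro w hw hwz
    obtain ⟨f, hf0, hfn, hstep⟩ := dA_spec (hreach w hw)
    have hfne : ∀ i ≤ dA A w, f i ≠ z := by
      intro i hi
      rcases Nat.lt_or_ge i (dA A w) with hlt | hge
      · intro hfz
        have : dA A z ≤ i := dA_le ⟨f, hf0, hfz, fun j hj => hstep j (by omega)⟩
        have : dA A w ≤ dA A z := hzmax w hw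
        omega
      · have : i = dA A w := by omega
        rw [this, hfn]; exact hwz
    refine ⟨f, hf0, hfn, fun i hi => ?_⟩
    obtain ⟨h1, h2', h3⟩ := hstep i hi
    exact ⟨h1, Finset.mem_erase.mpr ⟨hfne i (by omega), h2'⟩,
      Finset.mem_erase.mpr ⟨hfne (i + 1) (by omega), h3⟩⟩
  have herase : IsLatticeAnimal (A.erase z) := by
    constructor
    · exact Finset.mem_erase.mpr ⟨fun h => hz0 h.symm, hA.1⟩
    · intro w hw
      have hwA' := Finset.mem_of_mem_erase hw
      have hwz := (Finset.mem_erase.mp hw).1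
      exact rtg_of_reaches (key w hwA' hwz)
  -- adjacent predecessor
  obtain ⟨f, hf0, hfn, hstep⟩ := dA_spec (hreach z hzA)
  set n := dA A z with hn
  have hstep' := hstep (n - 1) (by omega)
  have hpred : f (n - 1 + 1) = z := by
    have : n - 1 + 1 = n := by omega
    rw [this, hfn]
  have hyz : f (n - 1) ≠ z := by
    intro hfz
    have : dA A z ≤ n - 1 := dA_le ⟨f, hf0, hfz, fun j hj => hstep j (by omega)⟩
    omega
  refine ⟨z, hzA, hz0, herase, f (n - 1), Finset.mem_erase.mpr ⟨hyz, hstep'.2.1⟩, ?_⟩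
  rw [← hpred]; exact hstep'.1

/-- Every animal with `n+1` sites has a spanning walk of length `2n` from the origin. -/
lemma exists_spanning_walk {A : Finset (ℤ × ℤ)} (hA : IsLatticeAnimal A) :
    ∀ n, A.card = n + 1 →
    ∃ g : ℕ → ℤ × ℤ, g 0 = (0, 0) ∧ (∀ i < 2 * n, LatAdj (g i) (g (i + 1))) ∧
      (Finset.range (2 * n + 1)).image g = A := by
  induction A using Finset.strongInduction with
  | _ A ih =>
  intro n hcard
  rcases n with _ | n
  · -- card = 1
    obtain ⟨a, ha⟩ := Finset.card_eq_one.mp hcard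
    have : a = (0, 0) := by
      have h0 := hA.1; rw [ha, Finset.mem_singleton] at h0; exact h0.symm
    subst this
    exact ⟨fun _ => (0, 0), rfl, by omega, by simp [ha]⟩
  · have h2 : 2 ≤ A.card := by omega
    obtain ⟨z, hzA, hz0, herase, y, hy, hyz⟩ := exists_leaf hA h2
    have hsub : A.erase z ⊂ A := Finset.erase_ssubset hzA
    have hcard' : (A.erase z).card = n + 1 := by
      rw [Finset.card_erase_of_mem hzA]; omega
    obtain ⟨g', hg0, hgadj, hgim⟩ := ih (A.erase z) hsub herase n hcard'
    have hyim : ∃ t, t < 2 * n + 1 ∧ g' t = y := by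
      rw [← hgim] at hy
      obtain ⟨t, ht, hgt⟩ := Finset.mem_image.mp hy
      exact ⟨t, Finset.mem_range.mp ht, hgt⟩
    obtain ⟨t, ht, hgt⟩ := hyim
    set g : ℕ → ℤ × ℤ := fun i => if i ≤ t then g' i else if i = t + 1 then z else g' (i - 2)
      with hg
    refine ⟨g, by simp [hg, hg0], ?_, ?_⟩
    · intro i hi
      rcases Nat.lt_or_ge i t with h1 | h1
      · have e1 : g i = g' i := by simp [hg, Nat.le_of_lt h1]
        have e2 : g (i + 1) = g' (i + 1) := by simp [hg, Nat.succ_le_of_lt h1]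
        rw [e1, e2]; exact hgadj i (by omega)
      rcases Nat.eq_or_lt_of_le h1 with h1 | h1
      · have e1 : g i = g' t := by simp [hg, ← h1]
        have e2 : g (i + 1) = z := by simp [hg, ← h1]
        rw [e1, e2, hgt]; exact hyz
      rcases Nat.eq_or_lt_of_le (Nat.succ_le_of_lt h1) with h2 | h2
      · have e1 : g i = z := by simp [hg, ← h2]
        have e2 : g (i + 1) = g' t := by
          have : ¬ (i + 1 ≤ t) := by omega
          have h3 : i + 1 ≠ t + 1 := by omega
          simp only [hg, this, if_false, h3]
          congr 1; omega
        rw [e1, e2, hgt]; exact latAdj_symm hyz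
      · have e1 : g i = g' (i - 2) := by
          have hn1 : ¬ (i ≤ t) := by omega
          have hn2 : i ≠ t + 1 := by omega
          simp [hg, hn1, hn2]
        have e2 : g (i + 1) = g' (i - 1) := by
          have hn1 : ¬ (i + 1 ≤ t) := by omega
          have hn2 : i + 1 ≠ t + 1 := by omega
          simp only [hg, hn1, if_false, hn2]
          have e4 : i + 1 - 2 = i - 1 := by omega
          rw [e4]
        rw [e1, e2]
        have e3 : i - 1 = (i - 2) + 1 := by omega
        rw [e3]
        exact hgadj (i - 2) (by omega)
    · ext w
      simp only [Finset.mem_image, Finset.mem_range]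
      constructor
      · rintro ⟨i, hi, rfl⟩
        rcases Nat.lt_or_ge t i with h1 | h1
        · rcases Nat.eq_or_lt_of_le (Nat.succ_le_of_lt h1) with h2 | h2
          · have : g i = z := by simp [hg, ← h2]
            rw [this]; exact hzA
          · have e1 : g i = g' (i - 2) := by
              have hn1 : ¬ (i ≤ t) := by omega
              have hn2 : i ≠ t + 1 := by omega
              simp [hg, hn1, hn2]
            rw [e1]
            have : g' (i - 2) ∈ A.erase z := by
              rw [← hgim]
              exact Finset.mem_image.mpr ⟨i - 2, Finset.mem_range.mpr (by omega), rfl⟩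
            exact Finset.mem_of_mem_erase this
        · have e1 : g i = g' i := by simp [hg, h1]
          rw [e1]
          have : g' i ∈ A.erase z := by
            rw [← hgim]
            exact Finset.mem_image.mpr ⟨i, Finset.mem_range.mpr (by omega), rfl⟩
          exact Finset.mem_of_mem_erase this
      · intro hw
        rcases eq_or_ne w z with rfl | hwz
        · refine ⟨t + 1, by omega, ?_⟩
          simp [hg]
        · have hw' : w ∈ A.erase z := Finset.mem_erase.mpr ⟨hwz, hw⟩
          rw [← hgim] at hw'
          obtain ⟨j, hj, hgj⟩ := Finset.mem_image.mp hw'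
          have hj' := Finset.mem_range.mp hj
          rcases le_or_gt j t with h1 | h1
          · exact ⟨j, by omega, by simp [hg, h1, hgj]⟩
          · refine ⟨j + 2, by omega, ?_⟩
            have hn1 : ¬ (j + 2 ≤ t) := by omega
            have hn2 : j + 2 ≠ t + 1 := by omega
            simp only [hg, hn1, if_false, hn2]
            simpa using hgj

def dir : Fin 4 → ℤ × ℤ := ![(1, 0), (-1, 0), (0, 1), (0, -1)]

lemma exists_dir {a b : ℤ × ℤ} (h : LatAdj a b) : ∃ d : Fin 4, b = a + dir d := by
  unfold LatAdj at h
  have h1 : (b.1 = a.1 + 1 ∧ b.2 = a.2) ∨ (b.1 = a.1 - 1 ∧ b.2 = a.2) ∨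
      (b.1 = a.1 ∧ b.2 = a.2 + 1) ∨ (b.1 = a.1 ∧ b.2 = a.2 - 1) := by omega
  rcases h1 with ⟨h1, h2⟩ | ⟨h1, h2⟩ | ⟨h1, h2⟩ | ⟨h1, h2⟩
  · exact ⟨0, by simp [dir, Prod.ext_iff, h1, h2]⟩
  · exact ⟨1, by simp [dir, Prod.ext_iff, h1, h2]; omega⟩
  · exact ⟨2, by simp [dir, Prod.ext_iff, h1, h2]⟩
  · exact ⟨3, by simp [dir, Prod.ext_iff, h1, h2]; omega⟩

def walkPos (f : ℕ → Fin 4) : ℕ → ℤ × ℤ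
  | 0 => (0, 0)
  | (i + 1) => walkPos f i + dir (f i)

noncomputable def decode (M : ℕ) (f : Fin M → Fin 4) : Finset (ℤ × ℤ) :=
  (Finset.range (M + 1)).image (walkPos (fun i => if h : i < M then f ⟨i, h⟩ else 0))

/-- The finitely many candidate animals with `s` sites. -/
noncomputable def Animals (s : ℕ) : Finset (Finset (ℤ × ℤ)) :=
  (Finset.univ : Finset (Fin (2 * (s - 1)) → Fin 4)).image (decode (2 * (s - 1)))

lemma card_Animals (s : ℕ) : (Animals s).card ≤ 4 ^ (2 * s) := by
  refine le_trans (Finset.card_image_le) ?_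
  rw [Finset.card_univ]
  have : Fintype.card (Fin (2 * (s - 1)) → Fin 4) = 4 ^ (2 * (s - 1)) := by
    simp [Fintype.card_fun]
  rw [this]
  exact Nat.pow_le_pow_right (by norm_num) (by omega)

lemma card_le_of_mem_Animals {s : ℕ} {A : Finset (ℤ × ℤ)} (h : A ∈ Animals s) :
    A.card ≤ 2 * s + 1 := by
  obtain ⟨f, _, rfl⟩ := Finset.mem_image.mp h
  refine le_trans Finset.card_image_le ?_
  rw [Finset.card_range]
  omega

lemma mem_Animals {A : Finset (ℤ × ℤ)} {s : ℕ} (hA : IsLatticeAnimal A) (hs : 1 ≤ s)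
    (hcard : A.card = s) : A ∈ Animals s := by
  obtain ⟨g, hg0, hgadj, hgim⟩ := exists_spanning_walk hA (s - 1) (by omega)
  set M := 2 * (s - 1) with hM
  have hdir : ∀ i, i < M → ∃ d : Fin 4, g (i + 1) = g i + dir d :=
    fun i hi => exists_dir (hgadj i hi)
  classical
  set f : Fin M → Fin 4 := fun i => (hdir i i.2).choose with hf
  have hagree : ∀ j, j ≤ M →
      walkPos (fun i => if h : i < M then f ⟨i, h⟩ else 0) j = g j := by
    intro j
    induction j with
    | zero => intro _; simp [walkPos, hg0]
    | succ j ihj =>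
      intro hj
      have hjM : j < M := by omega
      rw [walkPos, ihj (by omega)]
      simp only [hjM, dif_pos]
      exact ((hdir j hjM).choose_spec).symm
  refine Finset.mem_image.mpr ⟨f, Finset.mem_univ f, ?_⟩
  unfold decode
  rw [← hgim]
  apply Finset.image_congr
  intro x hx
  exact hagree x (by simpa using Nat.lt_succ_iff.mp (Finset.mem_range.mp hx))

/-- Shrinking: an animal with at least `s` sites contains a sub-animal with exactly `s`. -/
lemma exists_subanimal {A : Finset (ℤ × ℤ)} (hA : IsLatticeAnimal A) {s : ℕ} (hs : 1 ≤ s)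
    (hcard : s ≤ A.card) : ∃ A' ⊆ A, IsLatticeAnimal A' ∧ A'.card = s := by
  obtain ⟨d, hd⟩ : ∃ d, A.card = s + d := ⟨A.card - s, by omega⟩
  clear hcard
  induction d generalizing A with
  | zero => exact ⟨A, Finset.Subset.refl A, hA, by omega⟩
  | succ d ihd =>
    have h2 : 2 ≤ A.card := by omega
    obtain ⟨z, hzA, _, herase, _⟩ := exists_leaf hA h2
    obtain ⟨A', hsub, hA', hc⟩ := ihd herase (by rw [Finset.card_erase_of_mem hzA]; omega)
    exact ⟨A', hsub.trans (Finset.erase_subset z A), hA', hc⟩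

lemma linfSep_subset {m : ℕ} {B C : Finset (ℤ × ℤ)} (h : C ⊆ B) (hB : LinfSep m B) :
    LinfSep m C := fun a ha b hb hab => hB a (h ha) b (h hb) hab

/-- Greedy extraction of an `m`-separated subset of proportional size. -/
lemma exists_sep_subset (m : ℕ) (hm : 1 ≤ m) (S : Finset (ℤ × ℤ)) :
    ∃ B ⊆ S, LinfSep m B ∧ S.card ≤ B.card * (2 * m - 1) ^ 2 := by
  induction S using Finset.strongInduction with
  | _ S ih =>
  rcases S.eq_empty_or_nonempty with rfl | ⟨z, hz⟩
  · exact ⟨∅, Finset.Subset.refl _, fun a ha => by simp at ha, by simp⟩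
  · set N : Finset (ℤ × ℤ) :=
      Finset.Icc (z.1 - ((m : ℤ) - 1)) (z.1 + ((m : ℤ) - 1)) ×ˢ
        Finset.Icc (z.2 - ((m : ℤ) - 1)) (z.2 + ((m : ℤ) - 1)) with hN
    have hm' : (1 : ℤ) ≤ (m : ℤ) := by exact_mod_cast hm
    have hzN : z ∈ N := by
      simp only [hN, Finset.mem_product, Finset.mem_Icc]
      omega
    set S' := S \ N with hS'
    have hzS' : z ∉ S' := by simp [hS', hzN]
    have hsub : S' ⊂ S :=
      Finset.ssubset_iff_of_subset (Finset.sdiff_subset) |>.mpr ⟨z, hz, hzS'⟩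
    obtain ⟨B', hB'S', hsep', hcard'⟩ := ih S' hsub
    have hzB' : z ∉ B' := fun h => hzS' (hB'S' h)
    have hfar : ∀ w ∈ B', (m : ℤ) ≤ max |z.1 - w.1| |z.2 - w.2| := by
      intro w hw
      have hwS' : w ∈ S' := hB'S' hw
      have hwN : w ∉ N := (Finset.mem_sdiff.mp hwS').2
      by_contra hcon
      push_neg at hcon
      rw [max_lt_iff] at hcon
      obtain ⟨h1, h2⟩ := hcon
      rw [abs_lt] at h1 h2
      apply hwN
      simp only [hN, Finset.mem_product, Finset.mem_Icc]
      omega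
    refine ⟨insert z B', Finset.insert_subset hz (hB'S'.trans Finset.sdiff_subset), ?_, ?_⟩
    · intro a ha b hb hab
      rcases Finset.mem_insert.mp ha with rfl | ha' <;>
        rcases Finset.mem_insert.mp hb with rfl | hb'
      · exact absurd rfl hab
      · exact hfar b hb'
      · rw [abs_sub_comm a.1 b.1, abs_sub_comm a.2 b.2]; exact hfar a ha'
      · exact hsep' a ha' b hb' hab
    · have hNcard : N.card = (2 * m - 1) ^ 2 := by
        rw [hN, Finset.card_product, Int.card_Icc, Int.card_Icc]
        have e : ∀ a : ℤ, (a + ((m : ℤ) - 1) + 1 - (a - ((m : ℤ) - 1))).toNat = 2 * m - 1 := by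
          intro a; omega
        rw [e z.1, e z.2, sq]
      have h1 : S.card ≤ S'.card + N.card := by
        have := Finset.card_sdiff_add_card_eq_card (Finset.inter_subset_left (s₂ := N) (s₁ := S))
        have h2 : S \ (S ∩ N) = S' := by
          rw [hS', Finset.sdiff_inter_self_left]
        have h3 : (S ∩ N).card ≤ N.card := Finset.card_le_card Finset.inter_subset_right
        rw [h2] at this
        omega
      rw [Finset.card_insert_of_notMem hzB']
      calc S.card ≤ S'.card + N.card := h1
        _ ≤ B'.card * (2 * m - 1) ^ 2 + (2 * m - 1) ^ 2 := by rw [hNcard]; omega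
        _ = (B'.card + 1) * (2 * m - 1) ^ 2 := by ring

/-- The probability that `Y` vanishes on an `l`-separated finite set. -/
lemma prob_all_zero {Ω : Type} [MeasurableSpace Ω] (μ : Measure Ω) [IsProbabilityMeasure μ]
    {l : ℕ} (Y : ℤ × ℤ → Ω → ℝ) (hmeas : ∀ z, Measurable (Y z))
    (h01 : ∀ z ω, Y z ω = 0 ∨ Y z ω = 1) (hdep : LDependent μ l Y)
    {p : ℝ} (hp0 : 0 ≤ p) (hp : ∀ z, ENNReal.ofReal p ≤ μ {ω | Y z ω = 1})
    (C : Finset (ℤ × ℤ)) (hsep : LinfSep l C) :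
    μ {ω | ∀ z ∈ C, Y z ω = 0} ≤ ENNReal.ofReal (1 - p) ^ C.card := by
  classical
  induction C using Finset.induction with
  | empty => simp
  | insert z C hzC ih =>
    have hsep' : LinfSep l C :=
      linfSep_subset (Finset.subset_insert z C) hsep
    have hzero : ∀ w, μ {ω | Y w ω = 0} ≤ ENNReal.ofReal (1 - p) := by
      intro w
      have hsubc : {ω | Y w ω = 0} ⊆ {ω | Y w ω = 1}ᶜ := by
        intro ω hω hω1
        simp only [Set.mem_setOf_eq] at hω hω1
        rw [hω] at hω1; norm_num at hω1
      have hms : MeasurableSet {ω | Y w ω = 1} :=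
        (hmeas w) (measurableSet_singleton 1)
      calc μ {ω | Y w ω = 0} ≤ μ ({ω | Y w ω = 1}ᶜ) := measure_mono hsubc
        _ = 1 - μ {ω | Y w ω = 1} := prob_compl_eq_one_sub hms
        _ ≤ 1 - ENNReal.ofReal p := tsub_le_tsub_left (hp w) 1
        _ = ENNReal.ofReal (1 - p) := by
            rw [ENNReal.ofReal_sub 1 hp0, ENNReal.ofReal_one]
    rcases Finset.eq_empty_or_nonempty C with rfl | hCne
    · have : {ω | ∀ w ∈ insert z (∅ : Finset (ℤ × ℤ)), Y w ω = 0} = {ω | Y z ω = 0} := by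
        ext ω; simp
      rw [this]
      simpa using hzero z
    · have hdist : ∀ a ∈ ({z} : Set (ℤ × ℤ)), ∀ w ∈ (↑C : Set (ℤ × ℤ)),
          (l : ℤ) ≤ max |a.1 - w.1| |a.2 - w.2| := by
        intro a ha w hw
        rw [Set.mem_singleton_iff] at ha
        subst ha
        have hwC : w ∈ C := hw
        exact hsep a (Finset.mem_insert_self a C) w (Finset.mem_insert_of_mem hwC)
          (fun h => hzC (h ▸ hwC))
      have hind := hdep {z} ↑C hdist
      set s1 : Set (({z} : Set (ℤ × ℤ)) → ℝ) := {h | h ⟨z, rfl⟩ = 0} with hs1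
      set s2 : Set ((↑C : Set (ℤ × ℤ)) → ℝ) := {h | ∀ w, h w = 0} with hs2
      have hms1 : MeasurableSet s1 := (measurable_pi_apply _) (measurableSet_singleton 0)
      have hms2 : MeasurableSet s2 := by
        have : s2 = ⋂ (w : (↑C : Set (ℤ × ℤ))), (fun h => h w) ⁻¹' ({0} : Set ℝ) := by
          ext h; simp [hs2]
        rw [this]
        exact MeasurableSet.iInter fun w => (measurable_pi_apply w) (measurableSet_singleton 0)
      have hE1 : (fun ω (a : ({z} : Set (ℤ × ℤ))) => Y a ω) ⁻¹' s1 = {ω | Y z ω = 0} := rfl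
      have hE2 : (fun ω (w : (↑C : Set (ℤ × ℤ))) => Y w ω) ⁻¹' s2
          = {ω | ∀ w ∈ C, Y w ω = 0} := by
        ext ω
        constructor
        · intro h w hw
          exact h ⟨w, hw⟩
        · intro h w
          exact h w (Finset.mem_coe.mp w.2)
      have hsplit : {ω | ∀ w ∈ insert z C, Y w ω = 0}
          = (fun ω (a : ({z} : Set (ℤ × ℤ))) => Y a ω) ⁻¹' s1
            ∩ (fun ω (w : (↑C : Set (ℤ × ℤ))) => Y w ω) ⁻¹' s2 := by
        rw [hE1, hE2]
        ext ω
        simp [Finset.forall_mem_insert]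
      rw [hsplit, hind.measure_inter_preimage_eq_mul s1 s2 hms1 hms2,
        Finset.card_insert_of_notMem hzC, pow_succ, mul_comm (ENNReal.ofReal (1 - p) ^ C.card)]
      rw [hE1, hE2]
      exact mul_le_mul' (hzero z) (ih hsep')

end Stmt3Aux

open Stmt3Aux

/-- For every `l ≥ 1` there is `p0 ∈ (0,1)` such that for every `p ∈ (p0,1)`
and every `k ≥ 1` there are constants `b3, b4 > 0` (depending only on `l`, `k`, `p`) with:
for every `l`-dependent family `(Y_z)` of `{0,1}`-valued random variables with
`inf_z P(Y_z = 1) ≥ p` and every `s ≥ 1`, `P(m_s^k(Y) < b3 s) ≤ e^{-b4 s}`, where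
`m_s^k(Y)` is the minimum over lattice animals `A` with at least `s` sites of the maximal
value of `Σ_{z ∈ B} Y_z` over `k`-separated subsets `B ⊆ A`. -/
theorem stmt3 (l : ℕ) (hl : 1 ≤ l) :
    ∃ p0 : ℝ, 0 < p0 ∧ p0 < 1 ∧
      ∀ p : ℝ, p0 < p → p < 1 →
      ∀ k : ℕ, 1 ≤ k →
        ∃ b3 > (0 : ℝ), ∃ b4 > (0 : ℝ),
          ∀ (Ω : Type) (m : MeasurableSpace Ω) (μ : Measure Ω), IsProbabilityMeasure μ →
          ∀ Y : ℤ × ℤ → Ω → ℝ,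
            (∀ z, Measurable (Y z)) →
            (∀ z ω, Y z ω = 0 ∨ Y z ω = 1) →
            LDependent μ l Y →
            (∀ z, ENNReal.ofReal p ≤ μ {ω | Y z ω = 1}) →
            ∀ s : ℕ, 1 ≤ s →
              μ {ω | ∃ A : Finset (ℤ × ℤ), IsLatticeAnimal A ∧ s ≤ A.card ∧
                  ∀ B ⊆ A, LinfSep k B → ∑ z ∈ B, Y z ω < b3 * s} ≤
                ENNReal.ofReal (Real.exp (-b4 * s)) := by
  classical
  set r : ℕ := (2 * l - 1) ^ 2 with hr
  have hr1 : 1 ≤ r := Nat.one_le_pow _ _ (by omega)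
  have hrR : (0 : ℝ) < r := by exact_mod_cast hr1
  have hpow1 : (1 / 256 : ℝ) ^ (2 * r) < 1 :=
    pow_lt_one₀ (by norm_num) (by norm_num) (by omega)
  have hpowpos : (0 : ℝ) < (1 / 256 : ℝ) ^ (2 * r) := by positivity
  refine ⟨1 - (1 / 256 : ℝ) ^ (2 * r), by linarith, by linarith, ?_⟩
  intro p hp0p hp1 k hk
  set rk : ℕ := (2 * k - 1) ^ 2 with hrk
  have hrk1 : 1 ≤ rk := Nat.one_le_pow _ _ (by omega)
  have hrkR : (0 : ℝ) < rk := by exact_mod_cast hrk1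
  have hppos : 0 < p := by linarith
  refine ⟨1 / (2 * (rk : ℝ) * (r : ℝ)),
    div_pos one_pos (by positivity), Real.log 2, Real.log_pos (by norm_num), ?_⟩
  intro Ω m μ hprob Y hmeas h01 hdep hp s hs
  haveI := hprob
  set δ := 1 - p with hδ
  have hδ0 : 0 < δ := by rw [hδ]; linarith
  have hδ1 : δ ≤ 1 := by rw [hδ]; linarith
  have hδlt : δ < (1 / 256 : ℝ) ^ (2 * r) := by rw [hδ]; linarith
  choose BA hBA using fun A : Finset (ℤ × ℤ) => exists_sep_subset l hl A
  set 𝒞 : Finset (ℤ × ℤ) → Finset (Finset (ℤ × ℤ)) :=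
    fun A => (BA A).powerset.filter (fun C => s < 2 * C.card * r) with h𝒞
  set SC : Finset (ℤ × ℤ) → Set Ω := fun C => {ω | ∀ z ∈ C, Y z ω = 0} with hSC
  refine le_trans (measure_mono (?_ :
      _ ⊆ ⋃ A ∈ Animals s, ⋃ C ∈ 𝒞 A, SC C)) ?_
  · -- inclusion of the event in the union
    intro ω hω
    simp only [Set.mem_setOf_eq] at hω
    obtain ⟨A₀, hA₀, hcard₀, hall⟩ := hω
    obtain ⟨A, hAsub, hAanim, hAcard⟩ := exists_subanimal hA₀ hs hcard₀
    have hAmem := mem_Animals hAanim hs hAcard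
    set ones := A.filter (fun z => Y z ω = 1) with hones
    obtain ⟨Bk, hBksub, hBksep, hBkcard⟩ := exists_sep_subset k hk ones
    have hsum := hall Bk (hBksub.trans ((Finset.filter_subset _ A).trans hAsub)) hBksep
    have hsumeq : ∑ z ∈ Bk, Y z ω = (Bk.card : ℝ) := by
      rw [Finset.sum_congr rfl (fun z hz => (Finset.mem_filter.mp (hBksub hz)).2),
        Finset.sum_const, nsmul_eq_mul, mul_one]
    rw [hsumeq] at hsum
    have honesR : (ones.card : ℝ) < s / (2 * r) := by
      have h1 : (ones.card : ℝ) ≤ (Bk.card : ℝ) * rk := by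
        rw [hrk]; exact_mod_cast hBkcard
      have h2 : (Bk.card : ℝ) * rk < (1 / (2 * (rk : ℝ) * r) * s) * rk :=
        mul_lt_mul_of_pos_right hsum hrkR
      have h3 : (1 / (2 * (rk : ℝ) * r) * s) * rk = s / (2 * r) := by
        field_simp
      linarith
    set zeros := (BA A).filter (fun z => Y z ω = 0) with hzeros
    set onesBA := (BA A).filter (fun z => Y z ω = 1) with honesBA
    have hcc : zeros.card + onesBA.card = (BA A).card := by
      have he : onesBA = (BA A).filter (fun z => ¬ (Y z ω = 0)) := by
        rw [honesBA]
        refine Finset.filter_congr (fun z _ => ?_)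
        rcases h01 z ω with h | h <;> simp [h]
      rw [hzeros, he]
      exact Finset.card_filter_add_card_filter_not _
    have honesBAle : onesBA.card ≤ ones.card := by
      refine Finset.card_le_card ?_
      rw [honesBA, hones]
      exact Finset.filter_subset_filter _ (hBA A).1
    have hnr : s ≤ (BA A).card * r := by
      rw [hr, ← hAcard]
      exact (hBA A).2.2
    have hzRnat : s < 2 * zeros.card * r := by
      have c1 : (onesBA.card : ℝ) < s / (2 * r) :=
        lt_of_le_of_lt (by exact_mod_cast honesBAle) honesR
      have c1' : (onesBA.card : ℝ) * (2 * r) < s := (lt_div_iff₀ (by positivity)).mp c1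
      have c2 : (s : ℝ) ≤ (BA A).card * r := by exact_mod_cast hnr
      have c3 : (zeros.card : ℝ) + (onesBA.card : ℝ) = (BA A).card := by exact_mod_cast hcc
      have : (s : ℝ) < 2 * zeros.card * r := by nlinarith
      exact_mod_cast this
    refine Set.mem_iUnion₂.mpr ⟨A, hAmem, Set.mem_iUnion₂.mpr ⟨zeros, ?_, ?_⟩⟩
    · simp only [h𝒞, Finset.mem_filter, Finset.mem_powerset]
      exact ⟨by rw [hzeros]; exact Finset.filter_subset _ _, hzRnat⟩
    · intro z hz
      exact (Finset.mem_filter.mp hz).2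
  · -- the union bound
    have hperC : ∀ A, ∀ C ∈ 𝒞 A, μ (SC C) ≤ ENNReal.ofReal (δ ^ ((s : ℝ) / (2 * r))) := by
      intro A C hC
      simp only [h𝒞, Finset.mem_filter, Finset.mem_powerset] at hC
      obtain ⟨hCsub, hCcond⟩ := hC
      have hsepC : LinfSep l C := linfSep_subset hCsub (hBA A).2.1
      have hge : (s : ℝ) / (2 * r) ≤ (C.card : ℝ) := by
        rw [div_le_iff₀ (by positivity)]
        have : (s : ℝ) < 2 * (C.card : ℝ) * r := by exact_mod_cast hCcond
        linarith
      calc μ (SC C) ≤ ENNReal.ofReal (1 - p) ^ C.card :=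
            prob_all_zero μ Y hmeas h01 hdep hppos.le hp C hsepC
        _ = ENNReal.ofReal (δ ^ C.card) := by rw [ENNReal.ofReal_pow (by linarith) C.card]
        _ = ENNReal.ofReal (δ ^ (C.card : ℝ)) := by rw [Real.rpow_natCast]
        _ ≤ ENNReal.ofReal (δ ^ ((s : ℝ) / (2 * r))) :=
            ENNReal.ofReal_le_ofReal (Real.rpow_le_rpow_of_exponent_ge hδ0 hδ1 hge)
    have hcardC : ∀ A ∈ Animals s, (𝒞 A).card ≤ 2 ^ (2 * s + 1) := by
      intro A hA
      have h1 : (𝒞 A).card ≤ 2 ^ (BA A).card := by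
        refine le_trans (Finset.card_le_card (Finset.filter_subset _ _)) ?_
        rw [Finset.card_powerset]
      have h2 : (BA A).card ≤ 2 * s + 1 :=
        le_trans (Finset.card_le_card (hBA A).1) (card_le_of_mem_Animals hA)
      exact le_trans h1 (Nat.pow_le_pow_right (by norm_num) h2)
    have step1 : μ (⋃ A ∈ Animals s, ⋃ C ∈ 𝒞 A, SC C)
        ≤ ∑ A ∈ Animals s, ∑ C ∈ 𝒞 A, μ (SC C) :=
      le_trans (measure_biUnion_finset_le _ _)
        (Finset.sum_le_sum fun A _ => measure_biUnion_finset_le _ _)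
    have step2 : ∀ A ∈ Animals s, ∑ C ∈ 𝒞 A, μ (SC C)
        ≤ ((2 ^ (2 * s + 1) : ℕ) : ENNReal) * ENNReal.ofReal (δ ^ ((s : ℝ) / (2 * r))) := by
      intro A hA
      calc ∑ C ∈ 𝒞 A, μ (SC C)
          ≤ (𝒞 A).card • ENNReal.ofReal (δ ^ ((s : ℝ) / (2 * r))) :=
            Finset.sum_le_card_nsmul _ _ _ (hperC A)
        _ = ((𝒞 A).card : ENNReal) * ENNReal.ofReal (δ ^ ((s : ℝ) / (2 * r))) := by
            rw [nsmul_eq_mul]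
        _ ≤ _ := mul_le_mul_left (by exact_mod_cast Nat.cast_le.mpr (hcardC A hA)) _
    have step3 : ∑ A ∈ Animals s, (((2 ^ (2 * s + 1) : ℕ) : ENNReal) *
          ENNReal.ofReal (δ ^ ((s : ℝ) / (2 * r))))
        ≤ ((Animals s).card : ENNReal) * (((2 ^ (2 * s + 1) : ℕ) : ENNReal) *
          ENNReal.ofReal (δ ^ ((s : ℝ) / (2 * r)))) := by
      rw [Finset.sum_const, nsmul_eq_mul]
    refine le_trans step1 (le_trans (Finset.sum_le_sum step2) (le_trans step3 ?_))
    -- now a purely real estimate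
    have hofReal : ((Animals s).card : ENNReal) * (((2 ^ (2 * s + 1) : ℕ) : ENNReal) *
        ENNReal.ofReal (δ ^ ((s : ℝ) / (2 * r))))
        = ENNReal.ofReal (((Animals s).card : ℝ) * (((2 ^ (2 * s + 1) : ℕ) : ℝ) *
          (δ ^ ((s : ℝ) / (2 * r))))) := by
      rw [ENNReal.ofReal_mul (by positivity), ENNReal.ofReal_mul (by positivity),
        ENNReal.ofReal_natCast, ENNReal.ofReal_natCast]
    rw [hofReal]
    refine ENNReal.ofReal_le_ofReal ?_
    set q := δ ^ ((1 : ℝ) / (2 * (r : ℝ))) with hq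
    have hq0 : 0 ≤ q := Real.rpow_nonneg hδ0.le _
    have hqlt : q < 1 / 256 := by
      have h1 : δ ^ ((1 : ℝ) / (2 * (r : ℝ)))
          < ((1 / 256 : ℝ) ^ (2 * r)) ^ ((1 : ℝ) / (2 * (r : ℝ))) :=
        Real.rpow_lt_rpow hδ0.le hδlt (by positivity)
      have h2 : ((1 / 256 : ℝ) ^ (2 * r)) ^ ((1 : ℝ) / (2 * (r : ℝ))) = 1 / 256 := by
        rw [← Real.rpow_natCast (1 / 256 : ℝ) (2 * r), ← Real.rpow_mul (by norm_num)]
        have e : ((2 * r : ℕ) : ℝ) * ((1 : ℝ) / (2 * (r : ℝ))) = 1 := by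
          push_cast
          field_simp
        rw [e, Real.rpow_one]
      rw [hq]
      rw [h2] at h1
      exact h1
    have hx : δ ^ ((s : ℝ) / (2 * r)) = q ^ s := by
      rw [hq, ← Real.rpow_natCast (δ ^ ((1 : ℝ) / (2 * (r : ℝ)))) s,
        ← Real.rpow_mul hδ0.le]
      congr 1
      field_simp
    have hN1 : ((Animals s).card : ℝ) ≤ (16 : ℝ) ^ s := by
      have h1 : (Animals s).card ≤ 4 ^ (2 * s) := card_Animals s
      have h2 : ((4 : ℝ)) ^ (2 * s) = 16 ^ s := by
        rw [pow_mul]; norm_num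
      calc ((Animals s).card : ℝ) ≤ ((4 ^ (2 * s) : ℕ) : ℝ) := by exact_mod_cast h1
        _ = (4 : ℝ) ^ (2 * s) := by push_cast; ring
        _ = 16 ^ s := h2
    have hc2 : (((2 ^ (2 * s + 1) : ℕ) : ℝ)) = 2 * 4 ^ s := by
      push_cast
      rw [pow_succ, pow_mul]
      norm_num
      ring
    rw [hx, hc2]
    have hqs0 : (0 : ℝ) ≤ q ^ s := pow_nonneg hq0 s
    have hbound1 : ((Animals s).card : ℝ) * (2 * 4 ^ s * q ^ s)
        ≤ 16 ^ s * (2 * 4 ^ s * q ^ s) := by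
      refine mul_le_mul_of_nonneg_right hN1 ?_
      have : (0 : ℝ) ≤ 2 * 4 ^ s := by positivity
      exact mul_nonneg this hqs0
    have h64 : (64 : ℝ) ^ s = 16 ^ s * 4 ^ s := by rw [← mul_pow]; norm_num
    have hbound2 : (16 : ℝ) ^ s * (2 * 4 ^ s * q ^ s) = 2 * ((64 * q) ^ s) := by
      rw [mul_pow, h64]; ring
    have hbound3 : (2 : ℝ) * ((64 * q) ^ s) ≤ 2 * ((1 / 4) ^ s) := by
      have h641 : (64 : ℝ) * q ≤ 1 / 4 := by linarith
      have := pow_le_pow_left₀ (by positivity : (0:ℝ) ≤ 64 * q) h641 s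
      linarith
    have hhalf : ((1 / 2 : ℝ)) ^ s ≤ 1 / 2 := by
      have := pow_le_pow_of_le_one (by norm_num : (0:ℝ) ≤ 1/2) (by norm_num : (1/2:ℝ) ≤ 1) hs
      simpa using this
    have hbound4 : (2 : ℝ) * ((1 / 4) ^ s) ≤ (1 / 2) ^ s := by
      have h14 : ((1 / 4 : ℝ)) ^ s = (1 / 2) ^ s * (1 / 2) ^ s := by
        rw [← mul_pow]; norm_num
      have hp2 : (0 : ℝ) ≤ (1 / 2) ^ s := by positivity
      have h2a : 2 * ((1 / 2 : ℝ) ^ s) ≤ 1 := by linarith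
      calc (2 : ℝ) * ((1 / 4) ^ s) = (2 * (1 / 2) ^ s) * (1 / 2) ^ s := by rw [h14]; ring
        _ ≤ 1 * (1 / 2) ^ s := mul_le_mul_of_nonneg_right h2a hp2
        _ = (1 / 2) ^ s := one_mul _
    have hexp : Real.exp (-Real.log 2 * (s : ℝ)) = (1 / 2) ^ s := by
      rw [neg_mul, Real.exp_neg, mul_comm, Real.exp_nat_mul, Real.exp_log (by norm_num : (0:ℝ) < 2),
        one_div, inv_pow]
    rw [hexp]
    calc ((Animals s).card : ℝ) * (2 * 4 ^ s * q ^ s)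
        ≤ 16 ^ s * (2 * 4 ^ s * q ^ s) := hbound1
      _ = 2 * ((64 * q) ^ s) := hbound2
      _ ≤ 2 * ((1 / 4) ^ s) := hbound3
      _ ≤ (1 / 2) ^ s := hbound4
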